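/- Let (a_k)_{k≥1} be a uniformly bounded sequence of nonnegative reals such that (1/n) Σ_{k=1}^n a_k → ā and (1/n) Σ_{k=1}^n a_k² → ā̄² with ā̄² > 0 as n → ∞, and let (ε_k)_{k≥1} be i.i.d. with mean zero and variance σ_n² where σ_n² → ∞ in an iterated-limit sense. Then the almost-sure limits satisfy: lim_{σ²→∞} lim_{n→∞} h_n(a_1+ε_1, …, a_n+ε_n) = 1 almost surely; equivalently, (1 − ā/√(ā̄²)) + lim_{σ²→∞} ā σ² / ( √(ā̄² (ā̄² + σ²)) (√(ā̄²) + √(ā̄² + σ²)) ) = 1. -/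

import Mathlib

open MeasureTheory ProbabilityTheory Filter

/-- The Hoyer sparsity index of the vector `(x 0, …, x (n-1))`:
`h_n(x) = (√n - |Σ_{k<n} x k| / ‖x‖₂) / (√n - 1)`. -/
noncomputable def hoyerSeq (n : ℕ) (x : ℕ → ℝ) : ℝ :=
  (Real.sqrt n -
      |∑ k ∈ Finset.range n, x k| / Real.sqrt (∑ k ∈ Finset.range n, (x k) ^ 2)) /
    (Real.sqrt n - 1)

/-- The asymptotic bias induced on the Hoyer index by additive white noise of variance `s2`. -/
noncomputable def hoyerBias (abar a2bar s2 : ℝ) : ℝ :=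
  abar * s2 /
    (Real.sqrt (a2bar * (a2bar + s2)) * (Real.sqrt a2bar + Real.sqrt (a2bar + s2)))

lemma sqrt_tendsto_atTop' : Tendsto Real.sqrt atTop atTop := by
  apply tendsto_atTop_atTop.2
  intro b
  exact ⟨b ^ 2, fun x hx => by
    calc b ≤ Real.sqrt (b ^ 2) := by rw [Real.sqrt_sq_eq_abs]; exact le_abs_self b
    _ ≤ Real.sqrt x := Real.sqrt_le_sqrt hx⟩

lemma hoyerBias_eq (abar a2bar s2 : ℝ) (ha2 : 0 < a2bar) (hs2 : 0 ≤ s2) :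
    (1 - abar / Real.sqrt a2bar) + hoyerBias abar a2bar s2
      = 1 - abar / Real.sqrt (a2bar + s2) := by
  unfold hoyerBias
  have hA : 0 < Real.sqrt a2bar := Real.sqrt_pos.2 ha2
  have hB : 0 < Real.sqrt (a2bar + s2) := Real.sqrt_pos.2 (by linarith)
  have hmul : Real.sqrt (a2bar * (a2bar + s2)) = Real.sqrt a2bar * Real.sqrt (a2bar + s2) :=
    Real.sqrt_mul ha2.le _
  rw [hmul]
  set A := Real.sqrt a2bar with hAdef
  set B := Real.sqrt (a2bar + s2) with hBdef
  have hA2 : A ^ 2 = a2bar := Real.sq_sqrt ha2.le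
  have hB2 : B ^ 2 = a2bar + s2 := Real.sq_sqrt (by linarith)
  have hs2eq : s2 = B ^ 2 - A ^ 2 := by rw [hA2, hB2]; ring
  rw [hs2eq]
  field_simp
  ring

lemma neg_sqrt_le_of_sq_le {x y : ℝ} (h : x ^ 2 ≤ y) : -Real.sqrt y ≤ x := by
  have h1 : |x| = Real.sqrt (x ^ 2) := (Real.sqrt_sq_eq_abs x).symm
  have h2 : Real.sqrt (x ^ 2) ≤ Real.sqrt y := Real.sqrt_le_sqrt h
  have := neg_abs_le x
  nlinarith [Real.sqrt_nonneg y]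

theorem hoyer_divergent_noise_tendsto_one
    {Ω : Type*} [MeasureSpace Ω] [IsProbabilityMeasure (ℙ : Measure Ω)]
    (a : ℕ → ℝ) (abar a2bar : ℝ)
    (ha_nonneg : ∀ k, 0 ≤ a k)
    (ha_bdd : ∃ C, ∀ k, a k ≤ C)
    (hcesaro : Tendsto (fun n : ℕ => (∑ k ∈ Finset.range n, a k) / n) atTop (nhds abar))
    (hcesaro2 :
      Tendsto (fun n : ℕ => (∑ k ∈ Finset.range n, (a k) ^ 2) / n) atTop (nhds a2bar))
    (ha2bar : 0 < a2bar)
    (ε : ℝ → ℕ → Ω → ℝ) (L : ℝ → ℝ)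
    (hmeas : ∀ s2 > (0:ℝ), ∀ k, Measurable (ε s2 k))
    (hindep : ∀ s2 > (0:ℝ), iIndepFun (ε s2) ℙ)
    (hident : ∀ s2 > (0:ℝ), ∀ k, Measure.map (ε s2 k) ℙ = Measure.map (ε s2 0) ℙ)
    (hint : ∀ s2 > (0:ℝ), ∀ k, Integrable (ε s2 k) ℙ)
    (hmean : ∀ s2 > (0:ℝ), ∀ k, ∫ ω, ε s2 k ω = 0)
    (hsqint : ∀ s2 > (0:ℝ), ∀ k, Integrable (fun ω => (ε s2 k ω) ^ 2) ℙ)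
    (hvar : ∀ s2 > (0:ℝ), ∀ k, ∫ ω, (ε s2 k ω) ^ 2 = s2)
    (hL : ∀ s2 > (0:ℝ),
      ∀ᵐ ω ∂(ℙ : Measure Ω),
        Tendsto (fun n : ℕ => hoyerSeq n (fun k => a k + ε s2 k ω)) atTop
          (nhds (L s2))) :
    Tendsto L atTop (nhds 1) ∧
      Tendsto (fun s2 : ℝ => (1 - abar / Real.sqrt a2bar) + hoyerBias abar a2bar s2)
        atTop (nhds 1) := by
  have habar : 0 ≤ abar :=
    ge_of_tendsto' hcesaro fun n =>
      div_nonneg (Finset.sum_nonneg fun k _ => ha_nonneg k) (Nat.cast_nonneg n)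
  -- the limit of the bias expression
  have hbias_lim :
      Tendsto (fun s2 : ℝ => 1 - abar / Real.sqrt (a2bar + s2)) atTop (nhds 1) := by
    have h1 : Tendsto (fun s2 : ℝ => Real.sqrt (a2bar + s2)) atTop atTop :=
      sqrt_tendsto_atTop'.comp (tendsto_atTop_add_const_left atTop a2bar tendsto_id)
    have h2 : Tendsto (fun s2 : ℝ => abar / Real.sqrt (a2bar + s2)) atTop (nhds 0) :=
      Tendsto.div_atTop tendsto_const_nhds h1
    simpa using tendsto_const_nhds.sub h2
  refine ⟨?_, ?_⟩
  · -- main part : L tends to 1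
    -- key bounds for each s2 > a2bar
    have key : ∀ s2 : ℝ, a2bar < s2 →
        1 - Real.sqrt 2 * abar / (Real.sqrt s2 - Real.sqrt a2bar) ≤ L s2 ∧ L s2 ≤ 1 := by
      intro s2 hs
      have hs2pos : 0 < s2 := ha2bar.trans hs
      -- strong law for ε
      have hpair : Pairwise (Function.onFun (IndepFun · · (ℙ : Measure Ω)) (ε s2)) :=
        fun i j hij => (hindep s2 hs2pos).indepFun hij
      have hid : ∀ i, IdentDistrib (ε s2 i) (ε s2 0) ℙ ℙ := fun i =>
        ⟨(hmeas s2 hs2pos i).aemeasurable, (hmeas s2 hs2pos 0).aemeasurable,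
          hident s2 hs2pos i⟩
      have hT_ae := strong_law_ae_real (μ := ℙ) (ε s2) (hint s2 hs2pos 0) hpair hid
      rw [hmean s2 hs2pos 0] at hT_ae
      -- strong law for ε²
      have hsq : Measurable fun x : ℝ => x ^ 2 := measurable_id.pow_const 2
      have hpair2 : Pairwise (Function.onFun (IndepFun · · (ℙ : Measure Ω))
          fun k (ω : Ω) => (ε s2 k ω) ^ 2) :=
        fun i j hij => ((hindep s2 hs2pos).indepFun hij).comp hsq hsq
      have hid2 : ∀ i, IdentDistrib (fun ω => (ε s2 i ω) ^ 2)
          (fun ω => (ε s2 0 ω) ^ 2) ℙ ℙ := fun i => (hid i).comp hsq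
      have hU_ae := strong_law_ae_real (μ := ℙ)
        (fun k ω => (ε s2 k ω) ^ 2) (hsqint s2 hs2pos 0) hpair2 hid2
      rw [hvar s2 hs2pos 0] at hU_ae
      -- pick a good ω
      have hne : (MeasureTheory.ae (ℙ : Measure Ω)).NeBot :=
        ae_neBot.2 (IsProbabilityMeasure.ne_zero ℙ)
      obtain ⟨ω, hLω, hTω, hUω⟩ := ((hL s2 hs2pos).and (hT_ae.and hU_ae)).exists
      set e : ℕ → ℝ := fun k => ε s2 k ω with he
      set S : ℕ → ℝ := fun n => ∑ k ∈ Finset.range n, (a k + e k) with hSdef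
      set Q : ℕ → ℝ := fun n => ∑ k ∈ Finset.range n, (a k + e k) ^ 2 with hQdef
      have hQnonneg : ∀ n, 0 ≤ Q n := fun n =>
        Finset.sum_nonneg fun k _ => sq_nonneg _
      -- limit of S n / n
      have hS : Tendsto (fun n : ℕ => S n / n) atTop (nhds abar) := by
        have := hcesaro.add hTω
        rw [add_zero] at this
        refine this.congr fun n => ?_
        simp only [hSdef, Finset.sum_add_distrib, add_div]
      -- limit of |S n / n|
      have hSabs : Tendsto (fun n : ℕ => |S n / n|) atTop (nhds abar) := by
        have := hS.abs
        rwa [abs_of_nonneg habar] at this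
      -- ρ n and its limit
      set ρ : ℕ → ℝ := fun n => |S n / n| / Real.sqrt (Q n / n) with hρdef
      have hfrac : Tendsto (fun n : ℕ => (Real.sqrt n - 1) / Real.sqrt n) atTop (nhds 1) := by
        have hsq : Tendsto (fun n : ℕ => Real.sqrt n) atTop atTop :=
          sqrt_tendsto_atTop'.comp tendsto_natCast_atTop_atTop
        have hinv : Tendsto (fun n : ℕ => (Real.sqrt n)⁻¹) atTop (nhds 0) :=
          hsq.inv_tendsto_atTop
        have : Tendsto (fun n : ℕ => 1 - (Real.sqrt n)⁻¹) atTop (nhds 1) := by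
          simpa using tendsto_const_nhds.sub hinv
        refine this.congr' ?_
        filter_upwards [eventually_ge_atTop 1] with n hn
        have h0 : Real.sqrt n ≠ 0 :=
          ne_of_gt (Real.sqrt_pos.2 (by exact_mod_cast Nat.pos_of_ne_zero (by omega)))
        field_simp
      have hmain : ∀ n : ℕ, 2 ≤ n →
          (Real.sqrt n - 1) / Real.sqrt n * hoyerSeq n (fun k => a k + e k) = 1 - ρ n := by
        intro n hn
        have hnpos : (0:ℝ) < n := by exact_mod_cast Nat.lt_of_lt_of_le Nat.zero_lt_two hn
        have hsn : (0:ℝ) < Real.sqrt n := Real.sqrt_pos.2 hnpos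
        have hsn1 : (1:ℝ) < Real.sqrt n := by
          rw [show (1:ℝ) = Real.sqrt 1 from (Real.sqrt_one).symm]
          exact Real.sqrt_lt_sqrt (by norm_num) (by exact_mod_cast hn)
        have hq : Real.sqrt (Q n) = Real.sqrt n * Real.sqrt (Q n / n) := by
          rw [← Real.sqrt_mul hnpos.le]
          congr 1
          field_simp
        have habsS : |S n / n| = |S n| / n := by
          rw [abs_div, abs_of_pos hnpos]
        unfold hoyerSeq
        rw [show (∑ k ∈ Finset.range n, (a k + e k)) = S n from rfl,
          show (∑ k ∈ Finset.range n, (a k + e k) ^ 2) = Q n from rfl, hq]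
        simp only [hρdef]
        rw [habsS]
        have hsn1' : Real.sqrt n - 1 ≠ 0 := sub_ne_zero.2 hsn1.ne'
        have hkey : ∀ A : ℝ,
            (Real.sqrt n - 1) / Real.sqrt n * ((Real.sqrt n - A) / (Real.sqrt n - 1))
              = 1 - A / Real.sqrt n := by
          intro A
          field_simp
        rw [hkey]
        congr 1
        rw [div_div, div_div]
        congr 1
        rw [mul_right_comm, Real.mul_self_sqrt hnpos.le]
      have hρlim : Tendsto ρ atTop (nhds (1 - L s2)) := by
        have h1 : Tendsto (fun n : ℕ =>
            1 - (Real.sqrt n - 1) / Real.sqrt n * hoyerSeq n (fun k => a k + e k))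
            atTop (nhds (1 - 1 * L s2)) :=
          tendsto_const_nhds.sub (hfrac.mul hLω)
        rw [one_mul] at h1
        refine h1.congr' ?_
        filter_upwards [eventually_ge_atTop 2] with n hn
        rw [hmain n hn]
        ring
      -- L s2 ≤ 1
      have hρnonneg : ∀ n, 0 ≤ ρ n := fun n =>
        div_nonneg (abs_nonneg _) (Real.sqrt_nonneg _)
      have hL_le : L s2 ≤ 1 := by
        have := ge_of_tendsto' hρlim hρnonneg
        linarith
      -- lower bound on Q n / n
      have hsqrtlt : Real.sqrt a2bar < Real.sqrt s2 :=
        Real.sqrt_lt_sqrt ha2bar.le hs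
      set c : ℝ := (Real.sqrt s2 - Real.sqrt a2bar) ^ 2 with hcdef
      have hcpos : 0 < c := pow_pos (by linarith) 2
      have hQlow : ∀ n : ℕ, 1 ≤ n →
          (Real.sqrt ((∑ k ∈ Finset.range n, (a k) ^ 2) / n) -
            Real.sqrt ((∑ k ∈ Finset.range n, (e k) ^ 2) / n)) ^ 2 ≤ Q n / n := by
        intro n hn
        have hnpos : (0:ℝ) < n := by exact_mod_cast hn
        set X := (∑ k ∈ Finset.range n, (a k) ^ 2) with hX
        set Y := (∑ k ∈ Finset.range n, (e k) ^ 2) with hY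
        set W := (∑ k ∈ Finset.range n, a k * e k) with hW
        have hXnn : 0 ≤ X := Finset.sum_nonneg fun k _ => sq_nonneg _
        have hYnn : 0 ≤ Y := Finset.sum_nonneg fun k _ => sq_nonneg _
        have hQeq : Q n = X + 2 * W + Y := by
          have hterm : ∀ k, (a k + e k) ^ 2 = a k ^ 2 + 2 * (a k * e k) + e k ^ 2 :=
            fun k => by ring
          rw [hQdef]
          simp only [hterm]
          rw [Finset.sum_add_distrib, Finset.sum_add_distrib, ← Finset.mul_sum]
        have hCS : W ^ 2 ≤ X * Y := Finset.sum_mul_sq_le_sq_mul_sq _ _ _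
        have hCS' : (W / n) ^ 2 ≤ (X / n) * (Y / n) := by
          rw [div_pow, div_mul_div_comm,
            show ((n:ℝ) * n) = (n:ℝ) ^ 2 from (sq (n:ℝ)).symm]
          gcongr
        have hneg : -(Real.sqrt (X / n) * Real.sqrt (Y / n)) ≤ W / n := by
          have := neg_sqrt_le_of_sq_le hCS'
          rwa [Real.sqrt_mul (by positivity : (0:ℝ) ≤ X / n)] at this
        have hp2 : Real.sqrt (X / n) ^ 2 = X / n := Real.sq_sqrt (by positivity)
        have hq2 : Real.sqrt (Y / n) ^ 2 = Y / n := Real.sq_sqrt (by positivity)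
        have hQn : Q n / n = X / n + 2 * (W / n) + Y / n := by
          rw [hQeq]; ring
        rw [hQn, sub_sq, hp2, hq2]
        nlinarith [hneg]
      -- eventual lower bound on Q n / n
      have hUn : Tendsto (fun n : ℕ => (∑ k ∈ Finset.range n, (e k) ^ 2) / n)
          atTop (nhds s2) := hUω
      have hfn : Tendsto (fun n : ℕ =>
          (Real.sqrt ((∑ k ∈ Finset.range n, (a k) ^ 2) / n) -
            Real.sqrt ((∑ k ∈ Finset.range n, (e k) ^ 2) / n)) ^ 2) atTop (nhds c) := by
        have := (hcesaro2.sqrt.sub hUn.sqrt).pow 2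
        have hceq : (Real.sqrt a2bar - Real.sqrt s2) ^ 2 = c := by rw [hcdef]; ring
        rwa [hceq] at this
      have hQev : ∀ᶠ n : ℕ in atTop, c / 2 ≤ Q n / n := by
        filter_upwards [hfn.eventually (eventually_ge_nhds (by linarith : c / 2 < c)),
          eventually_ge_atTop 1] with n h1 h2
        exact le_trans h1 (hQlow n h2)
      -- eventual upper bound on ρ
      have hc2pos : (0:ℝ) < Real.sqrt (c / 2) := Real.sqrt_pos.2 (by linarith)
      have hρub : ∀ᶠ n : ℕ in atTop, ρ n ≤ |S n / n| / Real.sqrt (c / 2) := by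
        filter_upwards [hQev] with n hn
        simp only [hρdef]
        exact div_le_div_of_nonneg_left (abs_nonneg _) hc2pos (Real.sqrt_le_sqrt hn)
      have hub : Tendsto (fun n : ℕ => |S n / n| / Real.sqrt (c / 2)) atTop
          (nhds (abar / Real.sqrt (c / 2))) := hSabs.div_const _
      have hr_ub : 1 - L s2 ≤ abar / Real.sqrt (c / 2) :=
        le_of_tendsto_of_tendsto hρlim hub hρub
      -- rewrite √(c/2)
      set d : ℝ := Real.sqrt s2 - Real.sqrt a2bar with hddef
      have hdpos : 0 < d := by simp only [hddef]; linarith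
      have hcd : Real.sqrt (c / 2) = d / Real.sqrt 2 := by
        rw [hcdef, Real.sqrt_div (sq_nonneg _), Real.sqrt_sq hdpos.le]
      have h2pos : (0:ℝ) < Real.sqrt 2 := Real.sqrt_pos.2 (by norm_num)
      have hfinal : abar / Real.sqrt (c / 2) = Real.sqrt 2 * abar / d := by
        rw [hcd, div_div_eq_mul_div]
        ring
      rw [hfinal] at hr_ub
      exact ⟨by linarith, hL_le⟩
    -- squeeze
    have hd_atTop : Tendsto (fun s2 : ℝ => Real.sqrt s2 - Real.sqrt a2bar) atTop atTop := by
      simpa [sub_eq_add_neg] using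
        tendsto_atTop_add_const_right atTop (-(Real.sqrt a2bar)) sqrt_tendsto_atTop'
    have hlow : Tendsto
        (fun s2 : ℝ => 1 - Real.sqrt 2 * abar / (Real.sqrt s2 - Real.sqrt a2bar))
        atTop (nhds 1) := by
      have := Tendsto.div_atTop (tendsto_const_nhds :
        Tendsto (fun _ : ℝ => Real.sqrt 2 * abar) atTop (nhds (Real.sqrt 2 * abar))) hd_atTop
      simpa using tendsto_const_nhds.sub this
    refine tendsto_of_tendsto_of_tendsto_of_le_of_le' hlow tendsto_const_nhds ?_ ?_
    · filter_upwards [eventually_gt_atTop a2bar] with s2 hs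
      exact (key s2 hs).1
    · filter_upwards [eventually_gt_atTop a2bar] with s2 hs
      exact (key s2 hs).2
  · -- second part
    refine hbias_lim.congr' ?_
    filter_upwards [eventually_ge_atTop (0:ℝ)] with s2 hs2
    exact (hoyerBias_eq abar a2bar s2 ha2bar hs2).symm
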